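/- Let G be a finite 2-group which is a non-trivial OC-group. Then the quotient Z_3(G)/Z(G) is not cyclic. -/

import Mathlib

private lemma ord_eq_two_pow {G : Type} [Group G] (hG2 : IsPGroup 2 G) (g : G) :
    ∃ c : ℕ, orderOf g = 2 ^ c := by
  obtain ⟨k, hk⟩ := hG2 g
  have : orderOf g ∣ 2 ^ k := orderOf_dvd_of_pow_eq_one hk
  obtain ⟨c, _, hc⟩ := (Nat.dvd_prime_pow Nat.prime_two).mp this
  exact ⟨c, hc⟩


private lemma two_pow_dvd_le {m n : ℕ} (h : (2:ℕ) ^ m ∣ 2 ^ n) : m ≤ n := by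
  by_contra hlt
  push_neg at hlt
  have h1 : (2:ℕ) ^ m ≤ 2 ^ n := Nat.le_of_dvd (by positivity) h
  have h2 : (2:ℕ) ^ n < 2 ^ m := Nat.pow_lt_pow_right one_lt_two hlt
  omega


private lemma sq_mem {G : Type} [Group G]
    (hOC : ∀ x y : G, x ∉ Subgroup.center G → y ∉ Subgroup.center G →
      orderOf x = orderOf y → IsConj x y)
    {k : ℕ} {x : G} (hx : x ∈ upperCentralSeries G (k + 1))
    (hxc : x ∉ Subgroup.center G) : x ^ 2 ∈ upperCentralSeries G k := by
  have h1 : x⁻¹ ∉ Subgroup.center G := fun h => hxc (by simpa using inv_mem h)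
  obtain ⟨g, hg⟩ := isConj_iff.mp (hOC x x⁻¹ hxc h1 (orderOf_inv x).symm)
  have hg' : g * x⁻¹ * g⁻¹ = x := by
    have := congrArg (·⁻¹) hg
    simpa [mul_assoc] using this
  have hx' : x * g * x⁻¹ * g⁻¹ ∈ upperCentralSeries G k :=
    mem_upperCentralSeries_succ_iff.mp hx g
  have : x * g * x⁻¹ * g⁻¹ = x ^ 2 := by
    calc x * g * x⁻¹ * g⁻¹ = x * (g * x⁻¹ * g⁻¹) := by group
    _ = x * x := by rw [hg']
    _ = x ^ 2 := (sq x).symm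
  rwa [this] at hx'


private lemma conf {G : Type} [Group G]
    (hOC : ∀ x y : G, x ∉ Subgroup.center G → y ∉ Subgroup.center G →
      orderOf x = orderOf y → IsConj x y)
    {k : ℕ} {x y : G} (hx : x ∈ upperCentralSeries G (k + 1))
    (hxc : x ∉ Subgroup.center G) (hyc : y ∉ Subgroup.center G)
    (hord : orderOf x = orderOf y) :
    ∃ c ∈ upperCentralSeries G k, y = x * c := by
  obtain ⟨g, hg⟩ := isConj_iff.mp (hOC x y hxc hyc hord)
  refine ⟨x⁻¹ * g * x * g⁻¹, ?_, ?_⟩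
  · have := mem_upperCentralSeries_succ_iff.mp (inv_mem hx) g
    simpa [mul_assoc, commutatorElement_def, upperCentralSeries] using this
  · rw [← hg]; group


private lemma exists_step {G : Type} [Group G] [Finite G] (hG2 : IsPGroup 2 G) {k : ℕ}
    (hk : upperCentralSeries G k ≠ ⊤) :
    ∃ x, x ∈ upperCentralSeries G (k + 1) ∧ x ∉ upperCentralSeries G k := by
  set N := upperCentralSeries G k with hN
  have : N.Normal := (inferInstance : (Subgroup.upperCentralSeries G k).Normal)
  obtain ⟨g, hg⟩ : ∃ g : G, g ∉ N := by
    by_contra h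
    push_neg at h
    exact hk ((Subgroup.eq_top_iff' N).mpr h)
  have hnt : Nontrivial (G ⧸ N) :=
    ⟨⟨QuotientGroup.mk g, 1, by simpa [QuotientGroup.eq_one_iff] using hg⟩⟩
  have hQ : IsPGroup 2 (G ⧸ N) := hG2.to_quotient N
  have : Fact (Nat.Prime 2) := ⟨Nat.prime_two⟩
  have hcent : Nontrivial (Subgroup.center (G ⧸ N)) := hQ.center_nontrivial
  obtain ⟨⟨q, hq⟩, hq1⟩ := exists_ne (1 : Subgroup.center (G ⧸ N))
  obtain ⟨x, rfl⟩ := QuotientGroup.mk'_surjective N q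
  refine ⟨x, ?_, ?_⟩
  · rw [upperCentralSeries, mem_upperCentralSeries_succ_iff]
    intro y
    have hcomm : (QuotientGroup.mk' N) (x * y * x⁻¹ * y⁻¹) = 1 := by
      have := (Subgroup.mem_center_iff.mp hq) (QuotientGroup.mk' N y)
      simp only [map_mul, map_inv]
      rw [← this]
      group
    rwa [← MonoidHom.mem_ker, QuotientGroup.ker_mk'] at hcomm
  · intro hx
    apply hq1
    ext
    simpa [QuotientGroup.eq_one_iff] using hx


private lemma z2_pow_four {G : Type} [Group G] (hG2 : IsPGroup 2 G)
    (hOC : ∀ x y : G, x ∉ Subgroup.center G → y ∉ Subgroup.center G →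
      orderOf x = orderOf y → IsConj x y)
    {v : G} (hv : v ∈ upperCentralSeries G 2) (hvc : v ∉ Subgroup.center G) :
    v ^ 4 = 1 := by
  obtain ⟨c, hc⟩ := ord_eq_two_pow hG2 v
  by_contra h4
  have hcge : 3 ≤ c := by
    by_contra hlt
    push_neg at hlt
    apply h4
    apply orderOf_dvd_iff_pow_eq_one.mp
    rw [hc]
    calc (2:ℕ)^c ∣ 2^2 := pow_dvd_pow 2 (by omega)
    _ = 4 := by norm_num
  have hsq : v ^ 2 ∈ Subgroup.center G := by
    have := sq_mem hOC (k := 1) hv hvc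
    rwa [upperCentralSeries, upperCentralSeries_one] at this
  -- z := v ^ (2^(c-2)) is central
  have hzZ : v ^ (2 ^ (c - 2)) ∈ Subgroup.center G := by
    have he : 2 ^ (c - 2) = 2 * 2 ^ (c - 3) := by
      have h1 : c - 2 = (c - 3) + 1 := by omega
      rw [h1, pow_succ]
      ring
    rw [he, pow_mul]
    exact pow_mem hsq _
  set z := v ^ (2 ^ (c - 2)) with hzdef
  have hv'c : v ^ (1 + 2 ^ (c - 2)) ∉ Subgroup.center G := by
    intro hmem
    apply hvc
    have : v = v ^ (1 + 2 ^ (c - 2)) * z⁻¹ := by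
      rw [hzdef, pow_add, pow_one, mul_assoc, mul_inv_cancel, mul_one]
    rw [this]
    exact mul_mem hmem (inv_mem hzZ)
  have hvpow : v ^ (2 ^ (c-1)) ≠ 1 := by
    intro h
    have := orderOf_dvd_of_pow_eq_one h
    rw [hc] at this
    have := two_pow_dvd_le this
    omega
  have hord' : orderOf (v ^ (1 + 2 ^ (c - 2))) = 2 ^ c := by
    have h1 : (v ^ (1 + 2 ^ (c - 2))) ^ (2 ^ c) = 1 := by
      rw [← pow_mul, mul_comm, pow_mul, ← hc, pow_orderOf_eq_one, one_pow]
    have h2 : (v ^ (1 + 2 ^ (c - 2))) ^ (2 ^ (c-1)) ≠ 1 := by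
      have hexp : (1 + 2 ^ (c - 2)) * 2 ^ (c-1) = 2 ^ (c-1) + 2 ^ c * 2 ^ (c - 3) := by
        have e1 : 2 ^ (c-2) * 2 ^ (c-1) = 2 ^ c * 2 ^ (c-3) := by
          rw [← pow_add, ← pow_add]
          congr 1
          omega
        rw [add_mul, one_mul, e1]
      rw [← pow_mul, hexp, pow_add, pow_mul, ← hc, pow_orderOf_eq_one, one_pow, mul_one]
      exact hvpow
    have hd : orderOf (v ^ (1 + 2 ^ (c - 2))) ∣ 2 ^ c := orderOf_dvd_of_pow_eq_one h1
    obtain ⟨j, hj, he⟩ := (Nat.dvd_prime_pow Nat.prime_two).mp hd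
    rcases Nat.lt_or_ge j c with hlt | hge
    · exfalso
      apply h2
      apply orderOf_dvd_iff_pow_eq_one.mp
      rw [he]
      exact pow_dvd_pow 2 (by omega)
    · rw [he, le_antisymm hj hge]
  obtain ⟨g, hg⟩ := isConj_iff.mp (hOC v (v ^ (1 + 2 ^ (c - 2))) hvc hv'c (by rw [hc, hord']))
  -- squares are equal
  have hgsq : (v ^ (1 + 2 ^ (c - 2))) ^ 2 = v ^ 2 := by
    have : (v ^ (1 + 2 ^ (c - 2))) ^ 2 = g * v ^ 2 * g⁻¹ := by
      rw [← hg, pow_two, pow_two]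
      simp [mul_assoc]
    rw [this]
    have hcomm := Subgroup.mem_center_iff.mp hsq g
    rw [hcomm, mul_assoc, mul_inv_cancel, mul_one]
  apply hvpow
  have : v ^ (2 + 2 ^ (c-1)) = v ^ 2 := by
    have hexp : (1 + 2 ^ (c - 2)) * 2 = 2 + 2 ^ (c-1) := by
      have : 2 ^ (c-2) * 2 = 2 ^ (c-1) := by
        rw [← pow_succ]
        congr 1
        omega
      omega
    rw [← hexp, pow_mul] at *
    exact hgsq
  rw [pow_add] at this
  calc v ^ 2 ^ (c-1) = (v^2)⁻¹ * (v ^ 2 * v ^ 2 ^ (c-1)) := by group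
  _ = (v^2)⁻¹ * v^2 := by rw [this]
  _ = 1 := by group


private lemma center_pow_four {G : Type} [Group G] (hG2 : IsPGroup 2 G)
    (hOC : ∀ x y : G, x ∉ Subgroup.center G → y ∉ Subgroup.center G →
      orderOf x = orderOf y → IsConj x y)
    {u : G} (hu : u ∈ upperCentralSeries G 2) (huc : u ∉ Subgroup.center G)
    {z : G} (hz : z ∈ Subgroup.center G) : z ^ 4 = 1 := by
  obtain ⟨c, hc⟩ := ord_eq_two_pow hG2 z
  by_contra h4
  have hcge : 3 ≤ c := by
    by_contra hlt
    push_neg at hlt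
    apply h4
    apply orderOf_dvd_iff_pow_eq_one.mp
    rw [hc]
    calc (2:ℕ)^c ∣ 2^2 := pow_dvd_pow 2 (by omega)
    _ = 4 := by norm_num
  have hzc : Subgroup.center G ≤ upperCentralSeries G 2 := by
    rw [← upperCentralSeries_one (G := G)]
    exact upperCentralSeries_mono G (by omega)
  set z8 := z ^ (2 ^ (c - 3)) with hz8def
  have hz8Z : z8 ∈ Subgroup.center G := pow_mem hz _
  have hv2 : u * z8 ∈ upperCentralSeries G 2 := mul_mem hu (hzc hz8Z)
  have hvnc : u * z8 ∉ Subgroup.center G := by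
    intro hmem
    apply huc
    have : u = (u * z8) * z8⁻¹ := by rw [mul_assoc, mul_inv_cancel, mul_one]
    rw [this]
    exact mul_mem hmem (inv_mem hz8Z)
  have hcomm : Commute u z8 := (Subgroup.mem_center_iff.mp hz8Z u)
  have hvpow : (u * z8) ^ 4 = z ^ (2 ^ (c - 1)) := by
    rw [hcomm.mul_pow]
    rw [z2_pow_four hG2 hOC hu huc, one_mul, hz8def, ← pow_mul]
    congr 1
    have : c - 1 = (c - 3) + 2 := by omega
    rw [this, pow_add]
    ring
  have := z2_pow_four hG2 hOC hv2 hvnc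
  rw [hvpow] at this
  have hd := orderOf_dvd_of_pow_eq_one this
  rw [hc] at hd
  have := two_pow_dvd_le hd
  omega


private lemma class_bound {G : Type} [Group G] [Finite G] (x₀ : G) {m : ℕ}
    (hm : m ≤ Nat.card (Subgroup.centralizer ({x₀} : Set G))) :
    m * Set.ncard {y | IsConj x₀ y} ≤ Nat.card G := by
  classical
  set H := Subgroup.centralizer ({x₀} : Set G) with hH
  have hinj : Function.Injective
      (fun y : {y // IsConj x₀ y} =>
        (QuotientGroup.mk (Classical.choose (isConj_iff.mp y.2)) : G ⧸ H)) := by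
    intro y₁ y₂ h
    have h₁ := Classical.choose_spec (isConj_iff.mp y₁.2)
    have h₂ := Classical.choose_spec (isConj_iff.mp y₂.2)
    set g₁ := Classical.choose (isConj_iff.mp y₁.2) with hg₁
    set g₂ := Classical.choose (isConj_iff.mp y₂.2) with hg₂
    simp only [QuotientGroup.eq] at h
    have hc : x₀ * (g₁⁻¹ * g₂) = (g₁⁻¹ * g₂) * x₀ :=
      (Subgroup.mem_centralizer_iff.mp h) x₀ (Set.mem_singleton x₀)
    apply Subtype.ext
    rw [← h₁, ← h₂]
    have : g₁ * (x₀ * (g₁⁻¹ * g₂)) * g₂⁻¹ = g₁ * ((g₁⁻¹ * g₂) * x₀) * g₂⁻¹ := by rw [hc]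
    calc g₁ * x₀ * g₁⁻¹ = g₁ * ((g₁⁻¹ * g₂) * x₀) * g₂⁻¹ := by rw [← this]; group
    _ = g₂ * x₀ * g₂⁻¹ := by group
  have h1 : Set.ncard {y | IsConj x₀ y} ≤ Nat.card (G ⧸ H) := by
    rw [← Nat.card_coe_set_eq]
    exact Nat.card_le_card_of_injective _ hinj
  have h2 : Nat.card G = Nat.card (G ⧸ H) * Nat.card H :=
    Subgroup.card_eq_card_quotient_mul_card_subgroup H
  calc m * Set.ncard {y | IsConj x₀ y} ≤ Nat.card H * Nat.card (G ⧸ H) :=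
        Nat.mul_le_mul hm h1
  _ = Nat.card G := by rw [h2, mul_comm]


private lemma four_le_centralizer {G : Type} [Group G] [Finite G] {x t : G}
    (hx : x ∉ Subgroup.center G) (ht : t ∈ Subgroup.center G) (ht1 : t ≠ 1) :
    4 ≤ Nat.card (Subgroup.centralizer ({x} : Set G)) := by
  classical
  set H := Subgroup.centralizer ({x} : Set G) with hH
  have hxH : x ∈ H := Subgroup.mem_centralizer_iff.mpr (by
    intro h hh
    rw [Set.mem_singleton_iff] at hh
    rw [hh])
  have htH : t ∈ H := Subgroup.center_le_centralizer _ ht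
  have hx1 : x ≠ 1 := fun h => hx (h ▸ Subgroup.one_mem _)
  have htx : t ≠ x := fun h => hx (h ▸ ht)
  have htx1 : t * x ≠ 1 := by
    intro h
    have : x = t⁻¹ := (inv_eq_of_mul_eq_one_right h).symm
    exact hx (this ▸ inv_mem ht)
  have hxtx : x ≠ t * x := fun h => ht1 (right_eq_mul.mp h)
  have httx : t ≠ t * x := fun h => hx1 (left_eq_mul.mp h)
  have hsub : ({1, t, x, t * x} : Set G) ⊆ (H : Set G) := by
    intro a ha
    rcases ha with rfl | rfl | rfl | rfl
    · exact one_mem H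
    · exact htH
    · exact hxH
    · exact mul_mem htH hxH
  have hcard : ({1, t, x, t * x} : Set G).ncard = 4 := by
    rw [Set.ncard_insert_of_notMem (by simp [ht1.symm, hx1.symm, htx1.symm]),
      Set.ncard_insert_of_notMem (by simp [htx, httx]),
      Set.ncard_insert_of_notMem (by simp [hxtx]), Set.ncard_singleton]
  have hle : ({1, t, x, t * x} : Set G).ncard ≤ (H : Set G).ncard :=
    Set.ncard_le_ncard hsub (Set.toFinite _)
  rw [hcard] at hle
  rw [← Nat.card_coe_set_eq] at hle
  exact hle


/-- **Claim 5 in Lemma 2.6.** Let `G` be a finite 2-group which is a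
non-trivial OC-group.  Then `Z₃(G) / Z(G)` (the image of the third center in
`G / Z(G)`) is not cyclic. -/
theorem third_center_mod_center_not_cyclic (G : Type) [Group G] [Finite G]
    (hG2 : IsPGroup 2 G)
    (hOC : ∀ x y : G, x ∉ Subgroup.center G → y ∉ Subgroup.center G →
      orderOf x = orderOf y → IsConj x y)
    (h1 : ⊥ < Subgroup.center G) (h2 : Subgroup.center G < ⊤) :
    ¬ IsCyclic
      (Subgroup.map (QuotientGroup.mk' (Subgroup.center G)) (upperCentralSeries G 3)) := by
  intro hcyc
  classical
  have hfact : Fact (Nat.Prime 2) := ⟨Nat.prime_two⟩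
  set π := QuotientGroup.mk' (Subgroup.center G) with hπdef
  obtain ⟨t₀, ht₀Z, ht₀1⟩ : ∃ t, t ∈ Subgroup.center G ∧ t ≠ 1 := by
    obtain ⟨t, htZ, ht⟩ := SetLike.exists_of_lt h1
    exact ⟨t, htZ, by simpa using ht⟩
  have hZle : ∀ k : ℕ, 1 ≤ k → Subgroup.center G ≤ upperCentralSeries G k := by
    intro k hk
    rw [← upperCentralSeries_one (G := G)]
    exact upperCentralSeries_mono G hk
  -- step 1 : Z3 ≠ ⊤
  have h3top : upperCentralSeries G 3 ≠ ⊤ := by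
    intro htop
    have hQcyc : IsCyclic (G ⧸ Subgroup.center G) := by
      rw [htop] at hcyc
      have hrange : Subgroup.map π ⊤ = (⊤ : Subgroup (G ⧸ Subgroup.center G)) := by
        rw [← MonoidHom.range_eq_map]
        exact MonoidHom.range_eq_top.mpr (QuotientGroup.mk'_surjective _)
      rw [hrange] at hcyc
      haveI := hcyc
      exact isCyclic_of_surjective Subgroup.topEquiv.toMonoidHom
        (MulEquiv.surjective Subgroup.topEquiv)
    haveI := hQcyc
    have hcomm := commutative_of_cyclic_center_quotient π (le_of_eq (QuotientGroup.ker_mk' _))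
    exact h2.ne ((Subgroup.eq_top_iff' _).mpr fun g =>
      Subgroup.mem_center_iff.mpr fun h => hcomm h g)
  have h2top : upperCentralSeries G 2 ≠ ⊤ := by
    intro h
    apply h3top
    rw [eq_top_iff, ← h]
    exact upperCentralSeries_mono G (by omega)
  -- noncentral elements of Z2, Z3
  obtain ⟨v₀, hv₀2, hv₀1⟩ := exists_step hG2 (k := 1)
    (by rw [upperCentralSeries, upperCentralSeries_one]; exact h2.ne)
  have hv₀c : v₀ ∉ Subgroup.center G := by
    rw [← upperCentralSeries_one (G := G)]; exact hv₀1
  obtain ⟨w₀, hw₀3, hw₀2⟩ := exists_step hG2 (k := 2) h2top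
  have hw₀c : w₀ ∉ Subgroup.center G := fun hc => hw₀2 (hZle 2 (by omega) hc)
  -- generator
  obtain ⟨gen, hgen⟩ := IsCyclic.exists_generator
    (α := ↥(Subgroup.map π (upperCentralSeries G 3)))
  obtain ⟨w₁, hw₁3, hw₁π⟩ := Subgroup.mem_map.mp gen.2
  set hh := (gen : G ⧸ Subgroup.center G) with hhdef
  have pow4mem : ∀ x ∈ upperCentralSeries G 3, x ^ 4 ∈ Subgroup.center G := by
    intro x hx
    by_cases hxc : x ∈ Subgroup.center G
    · exact pow_mem hxc 4
    · have hx2 : x ^ 2 ∈ upperCentralSeries G 2 := sq_mem hOC (k := 2) hx hxc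
      rw [show (4:ℕ) = 2*2 from rfl, pow_mul]
      by_cases h2c : x ^ 2 ∈ Subgroup.center G
      · exact pow_mem h2c 2
      · have := sq_mem hOC (k := 1) hx2 h2c
        rwa [upperCentralSeries, upperCentralSeries_one] at this
  have hh4 : hh ^ (4:ℕ) = 1 := by
    rw [← hw₁π, ← map_pow, QuotientGroup.mk'_apply, QuotientGroup.eq_one_iff]
    exact pow4mem w₁ hw₁3
  have hmod : ∀ x ∈ upperCentralSeries G 3, ∃ m : ℕ, m < 4 ∧ π x = hh ^ m := by
    intro x hx
    obtain ⟨kk, hkk⟩ := Subgroup.mem_zpowers_iff.mp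
      (hgen ⟨π x, Subgroup.mem_map_of_mem π hx⟩)
    have hcoe : hh ^ kk = π x := by
      have := congrArg (Subtype.val) hkk
      simpa using this
    have h0 : 0 ≤ kk % 4 := Int.emod_nonneg kk (by norm_num)
    have h4' : kk % 4 < 4 := Int.emod_lt_of_pos kk (by norm_num)
    refine ⟨(kk % 4).toNat, by omega, ?_⟩
    have hredu : hh ^ kk = hh ^ (kk % 4) := by
      conv_lhs => rw [← Int.mul_ediv_add_emod kk 4]
      rw [zpow_add, zpow_mul]
      have : hh ^ (4:ℤ) = 1 := by
        rw [show (4:ℤ) = ((4:ℕ):ℤ) from rfl, zpow_natCast, hh4]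
      rw [this, one_zpow, one_mul]
    rw [← hcoe, hredu, ← zpow_natCast]
    congr 1
    omega
  have hne2 : hh ^ (2:ℕ) ≠ 1 := by
    intro h2e
    have hv : ∀ m : ℕ, m < 4 → hh ^ m = 1 ∨ hh ^ m = hh := by
      intro m hm
      interval_cases m
      · left; exact pow_zero hh
      · right; exact pow_one hh
      · left; exact h2e
      · right; rw [show (3:ℕ) = 2+1 from rfl, pow_succ, h2e, one_mul]
    have hq1 : π v₀ ≠ 1 := by
      rw [hπdef, Ne, QuotientGroup.mk'_apply, QuotientGroup.eq_one_iff]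
      exact hv₀c
    have hr1 : π w₀ ≠ 1 := by
      rw [hπdef, Ne, QuotientGroup.mk'_apply, QuotientGroup.eq_one_iff]
      exact hw₀c
    have hqr : π v₀ ≠ π w₀ := by
      intro he
      obtain ⟨z, hzZ, hz⟩ := (QuotientGroup.mk'_eq_mk' (N := Subgroup.center G)).mp he
      exact hw₀2 (hz ▸ mul_mem hv₀2 (hZle 2 (by omega) hzZ))
    obtain ⟨m, hm, hq⟩ := hmod v₀ (upperCentralSeries_mono G (by omega) hv₀2)
    obtain ⟨m', hm', hr⟩ := hmod w₀ hw₀3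
    rcases hv m hm with h | h
    · exact hq1 (by rw [hq, h])
    · rcases hv m' hm' with h' | h'
      · exact hr1 (by rw [hr, h'])
      · exact hqr (by rw [hq, hr, h, h'])
  have hne1 : hh ≠ 1 := fun e => hne2 (by rw [e, one_pow])
  have hwnc : w₁ ∉ Subgroup.center G := by
    intro hc
    apply hne1
    rw [← hw₁π, QuotientGroup.mk'_apply, QuotientGroup.eq_one_iff]
    exact hc
  have hu2 : w₁ ^ 2 ∈ upperCentralSeries G 2 := sq_mem hOC (k := 2) hw₁3 hwnc
  have huπ : π (w₁ ^ 2) = hh ^ (2:ℕ) := by rw [map_pow, hw₁π]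
  have hunc : w₁ ^ 2 ∉ Subgroup.center G := by
    intro hc
    apply hne2
    rw [← huπ, QuotientGroup.mk'_apply, QuotientGroup.eq_one_iff]
    exact hc
  have hu4 : (w₁ ^ 2) ^ 4 = 1 := z2_pow_four hG2 hOC hu2 hunc
  obtain ⟨cu, hcu⟩ := ord_eq_two_pow hG2 (w₁ ^ 2)
  have hcu2 : cu ≤ 2 := by
    apply two_pow_dvd_le
    rw [← hcu]
    have : orderOf (w₁ ^ 2) ∣ 4 := orderOf_dvd_of_pow_eq_one hu4
    simpa using this
  have hcu1 : 1 ≤ cu := by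
    by_contra hc
    push_neg at hc
    interval_cases cu
    · have : orderOf (w₁ ^ 2) = 1 := by simpa using hcu
      exact hunc (orderOf_eq_one_iff.mp this ▸ one_mem _)
  have hzf : ∀ z ∈ Subgroup.center G, z ^ 4 = 1 :=
    fun z hz => center_pow_four hG2 hOC hu2 hunc hz
  have cosetD : ∀ x ∈ upperCentralSeries G 3,
      ∃ m : ℕ, m < 4 ∧ ∃ z ∈ Subgroup.center G, w₁ ^ m * z = x := by
    intro x hx
    obtain ⟨m, hm, hxe⟩ := hmod x hx
    refine ⟨m, hm, ?_⟩
    have : π (w₁ ^ m) = π x := by rw [map_pow, hw₁π, hxe]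
    exact (QuotientGroup.mk'_eq_mk' (N := Subgroup.center G)).mp this
  have hwpow1 : w₁ ^ (2 ^ (cu + 1)) = 1 := by
    rw [pow_succ, mul_comm, pow_mul, ← hcu, pow_orderOf_eq_one]
  have hwpow2 : w₁ ^ (2 ^ cu) ≠ 1 := by
    have he : 2 ^ cu = 2 * 2 ^ (cu - 1) := by
      conv_lhs => rw [show cu = (cu - 1) + 1 by omega]
      rw [pow_succ]
      ring
    rw [he, pow_mul]
    intro hcon
    have hd := orderOf_dvd_of_pow_eq_one hcon
    rw [hcu] at hd
    have := two_pow_dvd_le hd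
    omega
  have hordw : orderOf w₁ = 2 ^ (cu + 1) := by
    have hd : orderOf w₁ ∣ 2 ^ (cu + 1) := orderOf_dvd_of_pow_eq_one hwpow1
    obtain ⟨j, hj, he⟩ := (Nat.dvd_prime_pow Nat.prime_two).mp hd
    rcases Nat.lt_or_ge j (cu + 1) with hlt | hge
    · exfalso
      apply hwpow2
      apply orderOf_dvd_iff_pow_eq_one.mp
      rw [he]
      exact pow_dvd_pow 2 (by omega)
    · rw [he, le_antisymm hj hge]
  have hA3 : ∀ x ∈ upperCentralSeries G 3, x ^ (2 ^ (cu + 1)) = 1 := by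
    intro x hx
    obtain ⟨m, hm, z, hzZ, hze⟩ := cosetD x hx
    rw [← hze]
    have hcz : Commute (w₁ ^ m) z := Subgroup.mem_center_iff.mp hzZ _
    rw [hcz.mul_pow]
    have hwm : (w₁ ^ m) ^ (2 ^ (cu + 1)) = 1 := by
      rw [← pow_mul, mul_comm, pow_mul, hwpow1, one_pow]
    have hz4 : z ^ (2 ^ (cu + 1)) = 1 := by
      have he : 2 ^ (cu + 1) = 4 * 2 ^ (cu - 1) := by
        have h5 : cu + 1 = 2 + (cu - 1) := by omega
        rw [h5, pow_add]
        norm_num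
      rw [he, pow_mul, hzf z hzZ, one_pow]
    rw [hwm, hz4, one_mul]
  have hB3 : ∀ y : G, y ∉ Subgroup.center G → 4 ∣ orderOf y →
      orderOf y ∣ 2 ^ (cu + 1) → y ∈ upperCentralSeries G 3 := by
    intro y hyc hy4 hyd
    obtain ⟨cy, hcy⟩ := ord_eq_two_pow hG2 y
    have hcy2 : 2 ≤ cy := by
      apply two_pow_dvd_le
      rw [show ((2:ℕ)^2) = 4 from rfl, ← hcy]
      exact hy4
    have hcyle : cy ≤ cu + 1 := two_pow_dvd_le (hcy ▸ hyd)
    rcases eq_or_lt_of_le hcyle with heq | hlt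
    · obtain ⟨cc, hccm, hcce⟩ := conf hOC (k := 2) hw₁3 hwnc hyc
        (by rw [hordw, hcy, heq])
      rw [hcce]
      exact mul_mem hw₁3 (upperCentralSeries_mono G (by omega) hccm)
    · have h22 : cy = 2 ∧ cu = 2 := by omega
      obtain ⟨cc, hccm, hcce⟩ := conf hOC (k := 1) hu2 hunc hyc
        (by rw [hcu, hcy, h22.1, h22.2])
      rw [hcce]
      refine upperCentralSeries_mono G (by omega) (mul_mem hu2 ?_)
      exact upperCentralSeries_mono G (by omega) hccm
  -- the inductive invariant
  set P : ℕ → Prop := fun k => ∃ e : ℕ, 2 ≤ e ∧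
      (∀ x ∈ upperCentralSeries G k, x ^ (2 ^ e) = 1) ∧
      (∀ y : G, y ∉ Subgroup.center G → 4 ∣ orderOf y →
        orderOf y ∣ 2 ^ e → y ∈ upperCentralSeries G k) with hPdef
  have hP3 : P 3 := ⟨cu + 1, by omega, hA3, hB3⟩
  have hPstep : ∀ k : ℕ, 3 ≤ k → P k → P (k + 1) := by
    intro k hk3 hPk
    obtain ⟨e, he2, hA, hB⟩ := hPk
    by_cases hbig : ∃ x, x ∈ upperCentralSeries G (k + 1) ∧
        x ∉ Subgroup.center G ∧ orderOf x = 2 ^ (e + 1)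
    · obtain ⟨xb, hxb, hxbc, hxbo⟩ := hbig
      refine ⟨e + 1, by omega, ?_, ?_⟩
      · intro x hx
        by_cases hxc : x ∈ Subgroup.center G
        · have he' : 2 ^ (e + 1) = 4 * 2 ^ (e - 1) := by
            have h5 : e + 1 = 2 + (e - 1) := by omega
            rw [h5, pow_add]
            norm_num
          rw [he', pow_mul, hzf x hxc, one_pow]
        · have hx2 : x ^ 2 ∈ upperCentralSeries G k := sq_mem hOC (k := k) hx hxc
          rw [pow_succ, mul_comm, pow_mul]
          exact hA _ hx2
      · intro y hyc hy4 hyd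
        by_cases hsmall : orderOf y ∣ 2 ^ e
        · exact upperCentralSeries_mono G (Nat.le_succ k) (hB y hyc hy4 hsmall)
        · obtain ⟨cy, hcy⟩ := ord_eq_two_pow hG2 y
          have hle : cy ≤ e + 1 := two_pow_dvd_le (hcy ▸ hyd)
          have hgt : ¬ cy ≤ e := fun hcon =>
            hsmall (hcy ▸ pow_dvd_pow 2 hcon)
          have : cy = e + 1 := by omega
          obtain ⟨cc, hccm, hcce⟩ := conf hOC (k := k) hxb hxbc hyc
            (by rw [hxbo, hcy, this])
          rw [hcce]
          exact mul_mem hxb (upperCentralSeries_mono G (Nat.le_succ k) hccm)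
    · push_neg at hbig
      refine ⟨e, he2, ?_, ?_⟩
      · intro x hx
        by_cases hxin : x ∈ upperCentralSeries G k
        · exact hA x hxin
        have hxc : x ∉ Subgroup.center G := fun hc =>
          hxin (hZle k (by omega) hc)
        have hx2 : x ^ 2 ∈ upperCentralSeries G k := sq_mem hOC (k := k) hx hxc
        have hxd : orderOf x ∣ 2 ^ (e + 1) := by
          apply orderOf_dvd_of_pow_eq_one
          rw [pow_succ, mul_comm, pow_mul]
          exact hA _ hx2
        obtain ⟨cx, hcx⟩ := ord_eq_two_pow hG2 x
        have hle : cx ≤ e + 1 := two_pow_dvd_le (hcx ▸ hxd)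
        have hne : cx ≠ e + 1 := by
          intro hcon
          exact (hbig x hx hxc) (by rw [hcx, hcon])
        rcases Nat.lt_or_ge cx 2 with hcx1 | hcx2
        · have hx2e : x ^ 2 = 1 := by
            apply orderOf_dvd_iff_pow_eq_one.mp
            rw [hcx]
            calc (2:ℕ) ^ cx ∣ 2 ^ 1 := pow_dvd_pow 2 (by omega)
            _ = 2 := by norm_num
          have he' : 2 ^ e = 2 * 2 ^ (e - 1) := by
            conv_lhs => rw [show e = (e - 1) + 1 by omega]
            rw [pow_succ]
            ring
          rw [he', pow_mul, hx2e, one_pow]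
        · exfalso
          apply hxin
          apply hB x hxc
          · rw [hcx]
            exact pow_dvd_pow 2 hcx2
          · rw [hcx]
            exact pow_dvd_pow 2 (by omega)
      · intro y hyc hy4 hyd
        exact upperCentralSeries_mono G (Nat.le_succ k) (hB y hyc hy4 hyd)
  have hPall : ∀ n : ℕ, 3 ≤ n → P n := by
    intro n hn
    induction n, hn using Nat.le_induction with
    | base => exact hP3
    | succ n hn ih => exact hPstep n hn ih
  have hnil : ∃ m : ℕ, upperCentralSeries G m = ⊤ := by
    haveI := hG2.isNilpotent
    exact Group.IsNilpotent.nilpotent'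
  set c := Nat.find hnil with hcdef
  have hctop : upperCentralSeries G c = ⊤ := Nat.find_spec hnil
  have hcmin : ∀ m, m < c → upperCentralSeries G m ≠ ⊤ := fun m hm => Nat.find_min hnil hm
  have hc4 : 4 ≤ c := by
    by_contra hlt
    push_neg at hlt
    apply h3top
    rw [eq_top_iff, ← hctop]
    exact upperCentralSeries_mono G (by omega)
  set n := c - 1 with hndef
  have hn3 : 3 ≤ n := by omega
  have hntop : upperCentralSeries G n ≠ ⊤ := hcmin n (by omega)
  have hn1top : upperCentralSeries G (n + 1) = ⊤ := by
    rw [show n + 1 = c by omega]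
    exact hctop
  obtain ⟨e, he2, hA, hB⟩ := hPall n hn3
  have hdich : ∀ x : G, x ∉ upperCentralSeries G n →
      orderOf x = 2 ∨ orderOf x = 2 ^ (e + 1) := by
    intro x hxn
    have hxc : x ∉ Subgroup.center G := fun hc => hxn (hZle n (by omega) hc)
    have hxtop : x ∈ upperCentralSeries G (n + 1) := by
      rw [hn1top]; exact Subgroup.mem_top x
    have hx2 : x ^ 2 ∈ upperCentralSeries G n := sq_mem hOC (k := n) hxtop hxc
    have hxd : orderOf x ∣ 2 ^ (e + 1) := by
      apply orderOf_dvd_of_pow_eq_one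
      rw [pow_succ, mul_comm, pow_mul]
      exact hA _ hx2
    obtain ⟨cx, hcx⟩ := ord_eq_two_pow hG2 x
    have hle : cx ≤ e + 1 := two_pow_dvd_le (hcx ▸ hxd)
    rcases Nat.lt_or_ge cx 2 with hsm | hge
    · interval_cases cx
      · exfalso
        apply hxn
        have : x = 1 := orderOf_eq_one_iff.mp (by simpa using hcx)
        rw [this]
        exact one_mem _
      · left; simpa using hcx
    · rcases Nat.lt_or_ge cx (e+1) with hlt | hge2
      · exfalso
        apply hxn
        apply hB x hxc
        · rw [hcx]
          exact pow_dvd_pow 2 hge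
        · rw [hcx]
          exact pow_dvd_pow 2 (by omega)
      · right
        rw [hcx]
        congr 1
        omega
  set Sn := (upperCentralSeries G n : Set G) with hSndef
  set A2 := {x : G | x ∉ upperCentralSeries G n ∧ orderOf x = 2} with hAdef
  set B2 := {x : G | x ∉ upperCentralSeries G n ∧ orderOf x = 2 ^ (e + 1)} with hBdef
  have hcover : Snᶜ ⊆ A2 ∪ B2 := by
    intro x hx
    have hxn : x ∉ upperCentralSeries G n := hx
    rcases hdich x hxn with h | h
    · exact Or.inl ⟨hxn, h⟩
    · exact Or.inr ⟨hxn, h⟩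
  have hAbound : 4 * A2.ncard ≤ Nat.card G := by
    rcases Set.eq_empty_or_nonempty A2 with hA0 | ⟨x₁, hx₁⟩
    · rw [hA0]; simp
    · obtain ⟨hx₁n, hx₁o⟩ := hx₁
      have hx₁c : x₁ ∉ Subgroup.center G := fun hc => hx₁n (hZle n (by omega) hc)
      have hsub : A2 ⊆ {y | IsConj x₁ y} := by
        rintro y ⟨hyn, hyo⟩
        exact hOC x₁ y hx₁c (fun hc => hyn (hZle n (by omega) hc)) (by rw [hx₁o, hyo])
      calc 4 * A2.ncard ≤ 4 * Set.ncard {y | IsConj x₁ y} :=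
            Nat.mul_le_mul_left 4 (Set.ncard_le_ncard hsub (Set.toFinite _))
      _ ≤ Nat.card G := class_bound x₁ (four_le_centralizer hx₁c ht₀Z ht₀1)
  have hBbound : 8 * B2.ncard ≤ Nat.card G := by
    rcases Set.eq_empty_or_nonempty B2 with hB0 | ⟨y₁, hy₁⟩
    · rw [hB0]; simp
    · obtain ⟨hy₁n, hy₁o⟩ := hy₁
      have hy₁c : y₁ ∉ Subgroup.center G := fun hc => hy₁n (hZle n (by omega) hc)
      have hsub : B2 ⊆ {y | IsConj y₁ y} := by
        rintro y ⟨hyn, hyo⟩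
        exact hOC y₁ y hy₁c (fun hc => hyn (hZle n (by omega) hc)) (by rw [hy₁o, hyo])
      have hcen : 8 ≤ Nat.card (Subgroup.centralizer ({y₁} : Set G)) := by
        have hzple : Subgroup.zpowers y₁ ≤ Subgroup.centralizer ({y₁} : Set G) := by
          rw [Subgroup.zpowers_le]
          refine Subgroup.mem_centralizer_iff.mpr ?_
          intro g hg
          rw [Set.mem_singleton_iff] at hg
          rw [hg]
        have h8 : 8 ≤ Nat.card (Subgroup.zpowers y₁) := by
          rw [Nat.card_zpowers, hy₁o]
          calc (8:ℕ) = 2 ^ 3 := by norm_num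
          _ ≤ 2 ^ (e+1) := Nat.pow_le_pow_right (by norm_num) (by omega)
        exact le_trans h8 (Subgroup.card_le_of_le hzple)
      calc 8 * B2.ncard ≤ 8 * Set.ncard {y | IsConj y₁ y} :=
            Nat.mul_le_mul_left 8 (Set.ncard_le_ncard hsub (Set.toFinite _))
      _ ≤ Nat.card G := class_bound y₁ hcen
  have hsplit : Sn.ncard + Snᶜ.ncard = Nat.card G := by
    rw [← Set.ncard_univ, ← Set.union_compl_self Sn]
    exact (Set.ncard_union_eq disjoint_compl_right (Set.toFinite _) (Set.toFinite _)).symm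
  have hSn2 : 2 * Sn.ncard ≤ Nat.card G := by
    have hcard : Sn.ncard = Nat.card (upperCentralSeries G n) := by
      rw [← Nat.card_coe_set_eq]
      rfl
    obtain ⟨d, hd⟩ := Subgroup.card_subgroup_dvd_card (upperCentralSeries G n)
    have hd1 : d ≠ 1 := by
      intro hcon
      rw [hcon, mul_one] at hd
      exact hntop (Subgroup.eq_top_of_card_eq _ hd.symm)
    have hd0 : d ≠ 0 := by
      intro hcon
      rw [hcon, mul_zero] at hd
      exact (Nat.card_pos (α := G)).ne' hd
    rw [hcard]
    have h2d : 2 ≤ d := by omega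
    calc 2 * Nat.card (upperCentralSeries G n)
        ≤ d * Nat.card (upperCentralSeries G n) := by
          exact Nat.mul_le_mul_right _ h2d
    _ = Nat.card (upperCentralSeries G n) * d := mul_comm _ _
    _ = Nat.card G := hd.symm
  have hcompl : Snᶜ.ncard ≤ A2.ncard + B2.ncard :=
    le_trans (Set.ncard_le_ncard hcover (Set.toFinite _)) (Set.ncard_union_le A2 B2)
  have hGpos : 0 < Nat.card G := Nat.card_pos
  omega
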